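/- For the ECO-system with axiom (2) and rules (k) ↝ (2)^{k-1}(k+1), the number f_n of nodes at level n satisfies f_{n+2} = 3 f_{n+1} - f_n with f_0 = 1, f_1 = 2; hence f_n = F_{2n+1} is the Fibonacci number of odd index (with F_1 = F_2 = 1), and F(z) = (1 - z)/(1 - 3z + z²). -/

import Mathlib

open PowerSeries

lemma aux_sum (m : Multiset ℕ) (h : ∀ x ∈ m, 1 ≤ x) :
    (m.map (fun k => 2 * (k - 1) + (k + 1))).sum + Multiset.card m = 3 * m.sum := by
  induction m using Multiset.induction_on with
  | empty => simp
  | cons a s ih =>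
    have ha : 1 ≤ a := h a (Multiset.mem_cons_self a s)
    have ihs := ih (fun x hx => h x (Multiset.mem_cons_of_mem hx))
    simp only [Multiset.map_cons, Multiset.sum_cons, Multiset.card_cons]
    omega

theorem stmt_2 (levels : ℕ → Multiset ℕ)
    (hlev0 : levels 0 = {2})
    (hlev : ∀ n, levels (n + 1) =
      (levels n).bind (fun k => ((List.replicate (k - 1) 2 ++ [k + 1] : List ℕ) : Multiset ℕ)))
    (f : ℕ → ℕ) (hf : ∀ n, f n = Multiset.card (levels n)) :
    f 0 = 1 ∧ f 1 = 2 ∧ (∀ n, f (n + 2) + f n = 3 * f (n + 1)) ∧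
    (∀ n, f n = Nat.fib (2 * n + 1)) ∧
    (1 - 3 * X + X ^ 2) * mk (fun n => (f n : ℚ)) = 1 - X := by
  have hpos : ∀ n, ∀ x ∈ levels n, 1 ≤ x := by
    intro n
    induction n with
    | zero => intro x hx; rw [hlev0] at hx; simp at hx; omega
    | succ n ih =>
      intro x hx
      rw [hlev n, Multiset.mem_bind] at hx
      obtain ⟨k, hk, hxk⟩ := hx
      simp [List.mem_replicate] at hxk
      rcases hxk with ⟨_, rfl⟩ | rfl <;> omega
  have hcard : ∀ n, f (n + 1) = (levels n).sum := by
    intro n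
    rw [hf, hlev, Multiset.card_bind]
    have : (Multiset.map (Multiset.card ∘ fun k =>
        ((List.replicate (k - 1) 2 ++ [k + 1] : List ℕ) : Multiset ℕ)) (levels n))
        = (levels n).map id := by
      apply Multiset.map_congr rfl
      intro k hk
      have := hpos n k hk
      simp only [Function.comp_apply, Multiset.coe_card, List.length_append,
        List.length_replicate, List.length_singleton, id]
      omega
    rw [this, Multiset.map_id]
  have hsum : ∀ n, (levels (n + 1)).sum + f n = 3 * (levels n).sum := by
    intro n
    rw [hlev, Multiset.sum_bind, hf]
    have : ((levels n).map fun k =>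
        ((List.replicate (k - 1) 2 ++ [k + 1] : List ℕ) : Multiset ℕ).sum)
        = (levels n).map (fun k => 2 * (k - 1) + (k + 1)) := by
      apply Multiset.map_congr rfl
      intro k hk
      simp [List.sum_replicate, mul_comm]
    rw [this]
    exact aux_sum _ (hpos n)
  have hf0 : f 0 = 1 := by rw [hf, hlev0]; rfl
  have hf1 : f 1 = 2 := by rw [hcard 0, hlev0]; rfl
  have hrec : ∀ n, f (n + 2) + f n = 3 * f (n + 1) := by
    intro n
    rw [hcard (n + 1), hcard n]
    exact hsum n
  have hfib : ∀ n, f n = Nat.fib (2 * n + 1) := by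
    have key : ∀ n, f n = Nat.fib (2 * n + 1) ∧ f (n + 1) = Nat.fib (2 * (n + 1) + 1) := by
      intro n
      induction n with
      | zero => exact ⟨by simpa using hf0, by simpa [Nat.fib] using hf1⟩
      | succ n ih =>
        refine ⟨ih.2, ?_⟩
        have h1 := hrec n
        have A : Nat.fib (2*n+3) = Nat.fib (2*n+1) + Nat.fib (2*n+2) := by
          rw [show 2*n+3 = (2*n+1)+2 from by ring, Nat.fib_add_two]
        have B : Nat.fib (2*n+4) = Nat.fib (2*n+2) + Nat.fib (2*n+3) := by
          rw [show 2*n+4 = (2*n+2)+2 from by ring, Nat.fib_add_two]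
        have Cc : Nat.fib (2*n+5) = Nat.fib (2*n+3) + Nat.fib (2*n+4) := by
          rw [show 2*n+5 = (2*n+3)+2 from by ring, Nat.fib_add_two]
        have h2 : Nat.fib (2 * (n + 2) + 1) + Nat.fib (2 * n + 1)
            = 3 * Nat.fib (2 * (n + 1) + 1) := by
          rw [show 2*(n+2)+1 = 2*n+5 from by ring, show 2*(n+1)+1 = 2*n+3 from by ring]
          omega
        show f (n + 2) = Nat.fib (2 * (n + 2) + 1)
        omega
    exact fun n => (key n).1
  refine ⟨hf0, hf1, hrec, hfib, ?_⟩
  have hq : ∀ n, (f (n + 2) : ℚ) + f n = 3 * f (n + 1) := by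
    intro n; exact_mod_cast congrArg (Nat.cast : ℕ → ℚ) (hrec n)
  set F := mk (fun n => (f n : ℚ)) with hF
  have h3 : (3 : ℚ⟦X⟧) = C (3 : ℚ) := (map_ofNat (C (R := ℚ)) 3).symm
  have expand : (1 - 3 * X + X ^ 2) * F = F - X * (C (3 : ℚ) * F) + X * (X * F) := by
    rw [← h3]; ring
  rw [expand]
  ext n
  match n with
  | 0 =>
    simp [map_add, map_sub, map_mul, coeff_zero_eq_constantCoeff, hF, hf0]
  | 1 =>
    simp [PowerSeries.coeff_succ_X_mul, coeff_C_mul, hF, hf0, hf1]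
    norm_num
  | (n + 2) =>
    rw [map_add, map_sub]
    rw [show (n + 2 : ℕ) = (n + 1) + 1 from rfl, PowerSeries.coeff_succ_X_mul,
      PowerSeries.coeff_succ_X_mul, PowerSeries.coeff_succ_X_mul, coeff_C_mul]
    simp only [hF, coeff_mk, map_sub, PowerSeries.coeff_one, PowerSeries.coeff_X]
    have := hq n
    norm_num
    linarith [hq n]
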